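/- Let r ≥ 1 be an integer and let G be a finite graph each of whose connected components has diameter at most r. Then for any two distance-r dominating sets D_s, D_t of G with |D_s| = |D_t|, there exists a TJ-sequence in G from D_s to D_t. -/
import Mathlib


/-- `D` is a distance-`r` dominating set of `G`. -/
def IsDrDS {V : Type*} (G : SimpleGraph V) (r : ℕ) (D : Set V) : Prop :=
  ∀ v : V, ∃ u ∈ D, G.Reachable u v ∧ G.dist u v ≤ r

/-- A TJ-sequence of length `q` of distance-`r` dominating sets of `G`. -/
def IsTJSeq {V : Type*} (G : SimpleGraph V) (r q : ℕ)
    (Dseq : Fin (q + 1) → Finset V) : Prop :=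
  (∀ i, IsDrDS G r ↑(Dseq i)) ∧
  ∀ i : Fin q, ∃ x ∈ Dseq i.castSucc, ∃ y, y ∉ Dseq i.castSucc ∧
    (↑(Dseq i.succ) : Set V) = (↑(Dseq i.castSucc) \ {x}) ∪ {y}

theorem stmt12 {V : Type*} [Fintype V] (G : SimpleGraph V) (r : ℕ) (hr : 1 ≤ r)
    (hdiam : ∀ u v : V, G.Reachable u v → G.dist u v ≤ r)
    (Ds Dt : Finset V) (hDs : IsDrDS G r ↑Ds) (hDt : IsDrDS G r ↑Dt)
    (hcard : Ds.card = Dt.card) :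
    ∃ (q : ℕ) (Dseq : Fin (q + 1) → Finset V),
      IsTJSeq G r q Dseq ∧ Dseq 0 = Ds ∧ Dseq (Fin.last q) = Dt := by
  classical
  have dom_iff : ∀ D : Set V, IsDrDS G r D ↔ ∀ v, ∃ u ∈ D, G.Reachable u v := by
    intro D
    constructor
    · intro h v; obtain ⟨u, hu, hru, _⟩ := h v; exact ⟨u, hu, hru⟩
    · intro h v; obtain ⟨u, hu, hru⟩ := h v; exact ⟨u, hu, hru, hdiam u v hru⟩
  suffices aux : ∀ n (Ds : Finset V), IsDrDS G r ↑Ds → Ds.card = Dt.card →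
      (Ds \ Dt).card ≤ n →
      ∃ (q : ℕ) (Dseq : Fin (q + 1) → Finset V),
        IsTJSeq G r q Dseq ∧ Dseq 0 = Ds ∧ Dseq (Fin.last q) = Dt by
    exact aux (Ds \ Dt).card Ds hDs hcard le_rfl
  intro n
  induction n with
  | zero =>
    intro Ds hDs hcard hle
    have h1 : Ds \ Dt = ∅ := Finset.card_eq_zero.mp (Nat.le_zero.mp hle)
    have h2 : Ds ⊆ Dt := by
      intro z hz
      by_contra hzt
      have : z ∈ Ds \ Dt := Finset.mem_sdiff.mpr ⟨hz, hzt⟩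
      simp [h1] at this
    have hEq : Ds = Dt := Finset.eq_of_subset_of_card_le h2 (le_of_eq hcard.symm)
    exact ⟨0, fun _ => Dt, ⟨fun _ => hDt, fun i => i.elim0⟩, by simp [hEq], rfl⟩
  | succ n ih =>
    intro Ds hDs hcard hle
    by_cases hEq : Ds = Dt
    · exact ⟨0, fun _ => Dt, ⟨fun _ => hDt, fun i => i.elim0⟩, by simp [hEq], rfl⟩
    · have hne : (Ds \ Dt).Nonempty := by
        rw [Finset.sdiff_nonempty]
        intro hsub
        exact hEq (Finset.eq_of_subset_of_card_le hsub hcard.ge)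
      obtain ⟨x, hx⟩ := hne
      have hxs : x ∈ Ds := (Finset.mem_sdiff.mp hx).1
      have hxt : x ∉ Dt := (Finset.mem_sdiff.mp hx).2
      obtain ⟨y, hyt, hyx, _⟩ := hDt x
      have hts : (Dt \ Ds).Nonempty := by
        rw [← Finset.card_pos, ← Finset.card_sdiff_comm hcard]
        exact Finset.card_pos.mpr ⟨x, hx⟩
      obtain ⟨y₀, hy₀⟩ := hts
      have hy₀t : y₀ ∈ Dt := (Finset.mem_sdiff.mp hy₀).1
      have hy₀s : y₀ ∉ Ds := (Finset.mem_sdiff.mp hy₀).2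
      set y' := if y ∈ Ds then y₀ else y with hy'
      have hy't : y' ∈ Dt := by
        rw [hy']; split <;> assumption
      have hy's : y' ∉ Ds := by
        rw [hy']; split
        · exact hy₀s
        · assumption
      set D' := insert y' (Ds.erase x) with hD'
      have hy'ne : y' ∉ Ds.erase x := fun h => hy's (Finset.mem_of_mem_erase h)
      have hcardpos : 1 ≤ Ds.card := Finset.card_pos.mpr ⟨x, hxs⟩
      have hD'card : D'.card = Dt.card := by
        rw [hD', Finset.card_insert_of_notMem hy'ne, Finset.card_erase_of_mem hxs]
        omega
      have hD'dom : IsDrDS G r ↑D' := by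
        rw [dom_iff]
        intro v
        obtain ⟨u, hu, huv⟩ := (dom_iff ↑Ds).mp hDs v
        by_cases hux : u = x
        · have hyD' : y ∈ D' := by
            by_cases hys : y ∈ Ds
            · have hyxne : y ≠ x := fun h => hxt (h ▸ hyt)
              exact Finset.mem_insert_of_mem (Finset.mem_erase.mpr ⟨hyxne, hys⟩)
            · have : y' = y := if_neg hys
              rw [hD', ← this]
              exact Finset.mem_insert_self _ _
          exact ⟨y, hyD', hyx.trans (hux ▸ huv)⟩
        · exact ⟨u, Finset.mem_insert_of_mem (Finset.mem_erase.mpr ⟨hux, hu⟩), huv⟩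
      have hsub : D' \ Dt ⊆ (Ds \ Dt).erase x := by
        intro z hz
        rw [Finset.mem_sdiff] at hz
        obtain ⟨hz1, hz2⟩ := hz
        have hzy' : z ≠ y' := fun h => hz2 (h ▸ hy't)
        have hze : z ∈ Ds.erase x := by
          rcases Finset.mem_insert.mp hz1 with h | h
          · exact absurd h hzy'
          · exact h
        exact Finset.mem_erase.mpr ⟨(Finset.mem_erase.mp hze).1,
          Finset.mem_sdiff.mpr ⟨(Finset.mem_erase.mp hze).2, hz2⟩⟩
      have hlt : (D' \ Dt).card ≤ n := by
        have h1 := Finset.card_le_card hsub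
        have h2 := Finset.card_erase_of_mem hx
        have h3 : 1 ≤ (Ds \ Dt).card := Finset.card_pos.mpr ⟨x, hx⟩
        omega
      obtain ⟨q, Dseq, ⟨hdom, hstep⟩, h0, hlast⟩ := ih D' hD'dom hD'card hlt
      refine ⟨q + 1, Fin.cons Ds Dseq, ⟨?_, ?_⟩, ?_, ?_⟩
      · intro i
        refine Fin.cases ?_ ?_ i
        · simpa using hDs
        · intro j; simpa using hdom j
      · intro i
        refine Fin.cases ?_ ?_ i
        · refine ⟨x, ?_, y', ?_, ?_⟩
          · rw [Fin.castSucc_zero, Fin.cons_zero]; exact hxs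
          · rw [Fin.castSucc_zero, Fin.cons_zero]; exact hy's
          · rw [Fin.castSucc_zero, Fin.cons_zero, Fin.succ_zero_eq_one,
              show (1 : Fin (q + 2)) = Fin.succ 0 from rfl, Fin.cons_succ, h0, hD']
            ext z
            simp only [Finset.coe_insert, Finset.coe_erase, Set.mem_insert_iff,
              Set.mem_diff, Set.mem_union, Set.mem_singleton_iff, Finset.mem_coe]
            tauto
        · intro j
          obtain ⟨a, ha, b, hb, heq⟩ := hstep j
          refine ⟨a, ?_, b, ?_, ?_⟩
          · rw [← Fin.succ_castSucc, Fin.cons_succ]; exact ha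
          · rw [← Fin.succ_castSucc, Fin.cons_succ]; exact hb
          · rw [← Fin.succ_castSucc, Fin.cons_succ, Fin.cons_succ]
            exact heq
      · exact Fin.cons_zero _ _
      · rw [show Fin.last (q + 1) = Fin.succ (Fin.last q) from rfl, Fin.cons_succ, hlast]
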